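/- For X, Y > 0, among all θ ≠ 0, feasibility of the system {‖y‖² ≥ max(θ² λ X, λ Y)} ∪ C (where C is a θ-independent constraint set closed under the rescalings y ↦ αy with 0 < α ≤ 1 when combined with fixing x, and x ↦ βx with 0 < β ≤ 1 when combined with fixing y, preserving the coupling constraints) for some λ implies feasibility for θ* = √(Y/X) with the same λ. Concretely in the scalarized model: if there exist x, y ≥ 0 (componentwise) with ∑ₙ yₙ² ≥ max((θ⁽¹⁾)² λ X, λY), yₙ = θ⁽¹⁾ xₙ gₙ, and pₙ = xₙ²((1−ρₙ)Hₙ+1) ≤ η ρₙ Hₙ for some θ⁽¹⁾ > θ* = √(Y/X), then setting y* = (θ*/θ⁽¹⁾) y with the same x, ρ adjusted so that (1−ρₙ*)Hₙ+1 scales appropriately yields ∑ₙ (yₙ*)² ≥ λY, yₙ* = θ* xₙ gₙ, and the power constraints still hold. -/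

import Mathlib

open scoped BigOperators

/-- The `θ⁽¹⁾ > θ* = √(Y/X)` case of Proposition 6 (scalarized model): rescaling the
received signals `y` by `θ*/θ⁽¹⁾` yields a solution feasible for `θ*` with the same `λ`. -/
theorem stmt_11 {N : ℕ} (η X Y lam θ1 : ℝ) (hη : 0 < η) (hX : 0 < X) (hY : 0 < Y)
    (hlam : lam ∈ Set.Ioc (0 : ℝ) 1)
    (g H ρ x y p : Fin N → ℝ)
    (hg : ∀ n, 0 < g n) (hH : ∀ n, 0 ≤ H n) (hρ : ∀ n, ρ n ∈ Set.Icc (0 : ℝ) 1)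
    (hx : ∀ n, 0 ≤ x n)
    (hθ1 : Real.sqrt (Y / X) < θ1)
    (hsum : max (θ1^2 * lam * X) (lam * Y) ≤ ∑ n, (y n)^2)
    (hy : ∀ n, y n = θ1 * x n * g n)
    (hpdef : ∀ n, p n = (x n)^2 * ((1 - ρ n) * H n + 1))
    (hpb : ∀ n, p n ≤ η * ρ n * H n) :
    let θstar := Real.sqrt (Y / X)
    let ystar := fun n => (θstar / θ1) * y n
    lam * Y ≤ ∑ n, (ystar n)^2 ∧
    (∀ n, ystar n = θstar * x n * g n) ∧
    (∀ n, p n ≤ η * ρ n * H n) := by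
  intro θstar ystar
  have hθs : 0 < θstar := Real.sqrt_pos.2 (div_pos hY hX)
  have hθ1p : 0 < θ1 := lt_trans hθs hθ1
  refine ⟨?_, ?_, hpb⟩
  · have h1 : θ1^2 * lam * X ≤ ∑ n, (y n)^2 := le_trans (le_max_left _ _) hsum
    have hs : θstar^2 = Y / X := Real.sq_sqrt (le_of_lt (div_pos hY hX))
    have key : ∑ n, (ystar n)^2 = (θstar/θ1)^2 * ∑ n, (y n)^2 := by
      simp [ystar, Finset.mul_sum, mul_pow]
    rw [key]
    have h2 : (θstar/θ1)^2 * (θ1^2 * lam * X) ≤ (θstar/θ1)^2 * ∑ n, (y n)^2 :=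
      mul_le_mul_of_nonneg_left h1 (sq_nonneg _)
    calc lam * Y = (θstar/θ1)^2 * (θ1^2 * lam * X) := by
          field_simp [hs]; rw [hs]; field_simp
      _ ≤ _ := h2
  · intro n
    simp only [ystar, hy n]
    field_simp
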